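/- Let R be a commutative domain over a field K, G an abelian group, and suppose R is G-graded with each graded piece of dimension at most 1 over K. Fix μ ∈ G. Then the set of derivations D of R that are homogeneous of degree μ (D(R_λ) ⊂ R_{λ+μ} for all λ ∈ G) forms a K-vector space, and if R is generated as a K-algebra by finitely many homogeneous elements, this space is finite-dimensional. -/
import Mathlib


/-- Let `R` be a commutative domain over a field `K` of characteristic
zero, graded by an abelian group `G` with each graded piece of dimension at most `1`.
For a fixed `μ ∈ G`, the derivations of `R` that are homogeneous of degree `μ` form a
`K`-subspace of the space of derivations, and this subspace is finite-dimensional as soon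
as `R` is generated as a `K`-algebra by finitely many homogeneous elements. -/
theorem homogeneous_derivations_form_finite_dimensional_space
    {K R G : Type*} [Field K] [CharZero K] [CommRing R] [IsDomain R] [Algebra K R]
    [AddCommGroup G] [DecidableEq G]
    (𝒜 : G → Submodule K R) [GradedAlgebra 𝒜]
    (hdim : ∀ g : G, Module.rank K (𝒜 g) ≤ 1)
    (μ : G) :
    ∃ W : Submodule K (Derivation K R R),
      (↑W : Set (Derivation K R R)) = {D | ∀ g : G, ∀ x ∈ 𝒜 g, D x ∈ 𝒜 (g + μ)} ∧
      ((∃ T : Finset R, (∀ x ∈ T, ∃ g : G, x ∈ 𝒜 g) ∧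
          Algebra.adjoin K (↑T : Set R) = ⊤) →
        FiniteDimensional K W) := by
  classical
  refine ⟨{ carrier := {D | ∀ g : G, ∀ x ∈ 𝒜 g, D x ∈ 𝒜 (g + μ)}
            add_mem' := by
              intro D1 D2 h1 h2 g x hx
              simpa using (𝒜 (g + μ)).add_mem (h1 g x hx) (h2 g x hx)
            zero_mem' := by intro g x hx; simp
            smul_mem' := by
              intro c D hD g x hx
              simpa using (𝒜 (g + μ)).smul_mem c (hD g x hx) }, rfl, ?_⟩
  rintro ⟨T, hT, htop⟩
  choose g' hg' using fun x : T => hT x x.2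
  have hfd : ∀ x : T, FiniteDimensional K (𝒜 (g' x + μ)) := fun x =>
    Module.rank_lt_aleph0_iff.mp ((hdim _).trans_lt Cardinal.one_lt_aleph0)
  letI := hfd
  set W : Submodule K (Derivation K R R) :=
    { carrier := {D | ∀ g : G, ∀ x ∈ 𝒜 g, D x ∈ 𝒜 (g + μ)}
      add_mem' := by
        intro D1 D2 h1 h2 g x hx
        simpa using (𝒜 (g + μ)).add_mem (h1 g x hx) (h2 g x hx)
      zero_mem' := by intro g x hx; simp
      smul_mem' := by
        intro c D hD g x hx
        simpa using (𝒜 (g + μ)).smul_mem c (hD g x hx) } with hW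
  show FiniteDimensional K W
  let Φ : W →ₗ[K] (∀ x : T, 𝒜 (g' x + μ)) :=
    { toFun := fun D x => ⟨(D : Derivation K R R) (x : R), D.2 (g' x) x (hg' x)⟩
      map_add' := by intro D1 D2; ext x; simp
      map_smul' := by intro c D; ext x; simp }
  have hinj : Function.Injective Φ := by
    intro D1 D2 h
    have hT' : ∀ r ∈ (↑T : Set R), (D1 : Derivation K R R) r = (D2 : Derivation K R R) r := by
      intro r hr
      have := congrFun h ⟨r, hr⟩
      exact congrArg Subtype.val this
    have := Derivation.eqOn_adjoin (R := K) hT'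
    rw [htop] at this
    ext r
    exact this (Algebra.mem_top (R := K) (x := r))
  exact FiniteDimensional.of_injective Φ hinj
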